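/- If j, k ≥ 2 are relatively prime, then there is no Baire-measurable function φ : 2^ℕ → 2^ℕ mapping (E₀ \ F₀(j))-related pairs to (E₀ \ F₀(k))-related pairs and F₀(j)-related pairs to F₀(k)-related pairs. -/

import Mathlib

/-- Eventual equality on Cantor space. -/
def E0 (c d : ℕ → Bool) : Prop := ∃ n : ℕ, ∀ m ≥ n, c m = d m

open Finset in
/-- The index-`k` subrelation `F₀(k)` of `E₀`: eventual agreement of partial
sums modulo `k`. -/
def F0 (k : ℕ) (c d : ℕ → Bool) : Prop :=
  ∃ n : ℕ, ∀ m ≥ n,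
    (∑ i ∈ range m, (c i).toNat) % k = (∑ i ∈ range m, (d i).toNat) % k

/-- A Baire-measurable function: preimages of open sets have the Baire
property. -/
def BaireMeasurableFun {α β : Type} [TopologicalSpace α] [TopologicalSpace β]
    (f : α → β) : Prop :=
  ∀ U : Set β, IsOpen U → BaireMeasurableSet (f ⁻¹' U)

namespace NBMH

open Filter Set Topology

/-- partial sums -/
def S (c : ℕ → Bool) (m : ℕ) : ℕ := ∑ i ∈ Finset.range m, (c i).toNat

lemma F0_def {k : ℕ} {c d : ℕ → Bool} :
    F0 k c d ↔ ∃ n : ℕ, ∀ m ≥ n, S c m % k = S d m % k := Iff.rfl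

/-- flip coordinates in F -/
def flp (F : Finset ℕ) (x : ℕ → Bool) : ℕ → Bool := fun i => if i ∈ F then !(x i) else x i

lemma flp_of_not_mem {F : Finset ℕ} {x : ℕ → Bool} {i : ℕ} (h : i ∉ F) : flp F x i = x i :=
  if_neg h

lemma flp_of_mem {F : Finset ℕ} {x : ℕ → Bool} {i : ℕ} (h : i ∈ F) : flp F x i = !(x i) :=
  if_pos h

lemma flp_empty (x : ℕ → Bool) : flp ∅ x = x := by
  funext i; simp [flp]

lemma flp_flp (F : Finset ℕ) (x : ℕ → Bool) : flp F (flp F x) = x := by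
  funext i
  by_cases h : i ∈ F <;> simp [flp, h]

lemma flp_insert {F : Finset ℕ} {n : ℕ} (h : n ∉ F) (x : ℕ → Bool) :
    flp (insert n F) x = flp {n} (flp F x) := by
  funext i
  rcases eq_or_ne i n with rfl | hi
  · simp [flp, h]
  · by_cases hF : i ∈ F <;> simp [flp, hF, hi]

lemma continuous_flp (F : Finset ℕ) : Continuous (flp F) := by
  refine continuous_pi fun i => ?_
  by_cases h : i ∈ F
  · simp only [flp, h, if_true]
    exact Continuous.comp (continuous_of_discreteTopology (f := fun b : Bool => !b))
      (continuous_apply i)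
  · simpa [flp, h] using continuous_apply i

def flpHomeo (F : Finset ℕ) : (ℕ → Bool) ≃ₜ (ℕ → Bool) where
  toFun := flp F
  invFun := flp F
  left_inv := flp_flp F
  right_inv := flp_flp F
  continuous_toFun := continuous_flp F
  continuous_invFun := continuous_flp F

lemma isOpenMap_flp (F : Finset ℕ) : IsOpenMap (flp F) := (flpHomeo F).isOpenMap

/-- Sum after flipping false coordinates -/
lemma S_flp {F : Finset ℕ} {x : ℕ → Bool} (hF : ∀ i ∈ F, x i = false) (m : ℕ) :
    S (flp F x) m = S x m + (Finset.range m ∩ F).card := by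
  unfold S
  have : ∀ i ∈ Finset.range m, ((flp F x) i).toNat = (x i).toNat + (if i ∈ F then 1 else 0) := by
    intro i _
    by_cases h : i ∈ F
    · simp [flp, h, hF i h]
    · simp [flp, h]
  rw [Finset.sum_congr rfl this, Finset.sum_add_distrib]
  congr 1
  rw [Finset.sum_ite_mem]
  simp

lemma E0_flp (F : Finset ℕ) (x : ℕ → Bool) : E0 x (flp F x) := by
  obtain ⟨N, hN⟩ := F.exists_nat_subset_range
  exact ⟨N, fun m hm => (flp_of_not_mem (fun hmem => by
    have := Finset.mem_range.1 (hN hmem); omega)).symm⟩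

lemma F0_flp_of_dvd {j : ℕ} {F : Finset ℕ} {x : ℕ → Bool}
    (hF : ∀ i ∈ F, x i = false) (hd : j ∣ F.card) : F0 j x (flp F x) := by
  obtain ⟨N, hN⟩ := F.exists_nat_subset_range
  rw [F0_def]
  refine ⟨N, fun m hm => ?_⟩
  have hsub : F ⊆ Finset.range m := hN.trans (Finset.range_subset_range.2 hm)
  rw [S_flp hF, Finset.inter_eq_right.2 hsub]
  obtain ⟨t, ht⟩ := hd
  rw [ht, Nat.add_mul_mod_self_left]

lemma not_F0_single {j n : ℕ} {x : ℕ → Bool} (hj : 2 ≤ j) (hx : x n = false) :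
    ¬ F0 j x (flp {n} x) := by
  rw [F0_def]
  rintro ⟨N, hN⟩
  have hF : ∀ i ∈ ({n} : Finset ℕ), x i = false := by simpa using hx
  have hm := hN (max N (n+1)) (le_max_left _ _)
  rw [S_flp hF] at hm
  have hc : (Finset.range (max N (n+1)) ∩ {n}).card = 1 := by
    rw [Finset.inter_eq_right.2 (by simp [Finset.singleton_subset_iff])]
    simp
  rw [hc] at hm
  have h1 : S x (max N (n+1)) ≡ S x (max N (n+1)) + 1 [MOD j] := hm
  have h2 := (Nat.modEq_iff_dvd' (Nat.le_succ _)).1 h1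
  have he : (S x (max N (n+1))).succ - S x (max N (n+1)) = 1 := by omega
  rw [he] at h2
  have := Nat.le_of_dvd one_pos h2
  omega

lemma E0_of_F0 {k : ℕ} (hk : 2 ≤ k) {c d : ℕ → Bool} (h : F0 k c d) : E0 c d := by
  rw [F0_def] at h
  obtain ⟨n, hn⟩ := h
  refine ⟨n, fun m hm => ?_⟩
  have h1 : S c m ≡ S d m [MOD k] := hn m hm
  have h2 : S c (m+1) ≡ S d (m+1) [MOD k] := hn (m+1) (by omega)
  have e1 : S c (m+1) = S c m + (c m).toNat := Finset.sum_range_succ _ _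
  have e2 : S d (m+1) = S d m + (d m).toNat := Finset.sum_range_succ _ _
  rw [e1, e2] at h2
  have h3 : (c m).toNat ≡ (d m).toNat [MOD k] := Nat.ModEq.add_left_cancel h1 h2
  have hc : (c m).toNat < k := by cases c m <;> simp <;> omega
  have hd : (d m).toNat < k := by cases d m <;> simp <;> omega
  have : (c m).toNat = (d m).toNat := by
    have := h3
    unfold Nat.ModEq at this
    rwa [Nat.mod_eq_of_lt hc, Nat.mod_eq_of_lt hd] at this
  cases hcm : c m <;> cases hdm : d m <;> simp_all

end NBMH

namespace NBMH

open Filter Set Topology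

/-- The mod-`k` index cocycle: eventual difference `a` of partial sums mod `k`. -/
def Dk (k : ℕ) (c d : ℕ → Bool) (a : ZMod k) : Prop :=
  ∀ᶠ m in atTop, ((S d m : ℕ) : ZMod k) = ((S c m : ℕ) : ZMod k) + a

lemma S_split (c : ℕ → Bool) {n m : ℕ} (h : n ≤ m) :
    S c m = S c n + ∑ i ∈ Finset.Ico n m, (c i).toNat := by
  unfold S
  rw [Finset.range_eq_Ico, ← Finset.sum_Ico_consecutive _ (Nat.zero_le n) h, Finset.range_eq_Ico]

lemma dk_of_F0 {k : ℕ} {c d : ℕ → Bool} (h : F0 k c d) : Dk k c d 0 := by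
  rw [F0_def] at h
  obtain ⟨n, hn⟩ := h
  rw [Dk, eventually_atTop]
  exact ⟨n, fun m hm => by rw [add_zero]; exact (ZMod.natCast_eq_natCast_iff _ _ _).2 (hn m hm).symm⟩

lemma F0_of_dk0 {k : ℕ} {c d : ℕ → Bool} (h : Dk k c d 0) : F0 k c d := by
  rw [Dk, eventually_atTop] at h
  obtain ⟨n, hn⟩ := h
  rw [F0_def]
  refine ⟨n, fun m hm => ?_⟩
  have := hn m hm
  rw [add_zero] at this
  exact (ZMod.natCast_eq_natCast_iff _ _ _).1 this.symm

lemma dk_exists {k : ℕ} {c d : ℕ → Bool} (h : E0 c d) : ∃ a : ZMod k, Dk k c d a := by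
  obtain ⟨n, hn⟩ := h
  refine ⟨((S d n : ℕ) : ZMod k) - ((S c n : ℕ) : ZMod k), ?_⟩
  rw [Dk, eventually_atTop]
  refine ⟨n, fun m hm => ?_⟩
  have hc := S_split c hm
  have hd := S_split d hm
  have htail : ∑ i ∈ Finset.Ico n m, (d i).toNat = ∑ i ∈ Finset.Ico n m, (c i).toNat :=
    Finset.sum_congr rfl fun i hi => by rw [hn i (Finset.mem_Ico.1 hi).1]
  rw [hc, hd, htail]
  push_cast
  ring

lemma dk_unique {k : ℕ} {c d : ℕ → Bool} {a b : ZMod k}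
    (h1 : Dk k c d a) (h2 : Dk k c d b) : a = b := by
  obtain ⟨m, hm1, hm2⟩ := (h1.and h2).exists
  exact add_left_cancel (hm1.symm.trans hm2)

/-- membership sets of the partial-sum values are open -/
lemma isOpen_S_eq (k m : ℕ) (b : ZMod k) : IsOpen {z : ℕ → Bool | ((S z m : ℕ) : ZMod k) = b} := by
  rw [isOpen_iff_mem_nhds]
  intro z hz
  have hmem : ∀ i ∈ Finset.range m, {y : ℕ → Bool | y i = z i} ∈ nhds z := by
    intro i _
    have heq : {y : ℕ → Bool | y i = z i} = (fun y : ℕ → Bool => y i) ⁻¹' {z i} := by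
      ext y; simp
    rw [heq]
    exact (IsOpen.preimage (continuous_apply i) (isOpen_discrete _)).mem_nhds
      (Set.mem_singleton _)
  have hV : (⋂ i ∈ Finset.range m, {y : ℕ → Bool | y i = z i}) ∈ nhds z :=
    (Filter.biInter_finset_mem _).2 hmem
  refine Filter.mem_of_superset hV fun y hy => ?_
  simp only [Set.mem_iInter, Set.mem_setOf_eq] at hy
  have : S y m = S z m := Finset.sum_congr rfl fun i hi => by rw [hy i hi]
  simpa [this] using hz

lemma baireMeasurable_A (k : ℕ) [NeZero k] (φ : (ℕ → Bool) → (ℕ → Bool))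
    (hBM : BaireMeasurableFun φ) (n : ℕ) (a : ZMod k) :
    BaireMeasurableSet {x : ℕ → Bool | Dk k (φ x) (φ (flp {n} x)) a} := by
  have key : {x : ℕ → Bool | Dk k (φ x) (φ (flp {n} x)) a}
      = ⋃ M : ℕ, ⋂ t : ℕ, ⋃ q : ZMod k,
        ((φ ⁻¹' {z | ((S z (M+t) : ℕ) : ZMod k) = q}) ∩
         (flp {n} ⁻¹' (φ ⁻¹' {z | ((S z (M+t) : ℕ) : ZMod k) = q + a}))) := by
    ext x
    simp only [Dk, eventually_atTop, Set.mem_setOf_eq, Set.mem_iUnion, Set.mem_iInter,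
      Set.mem_inter_iff, Set.mem_preimage]
    constructor
    · rintro ⟨M, hM⟩
      exact ⟨M, fun t => ⟨_, rfl, by rw [hM (M+t) (by omega)]⟩⟩
    · rintro ⟨M, hM⟩
      refine ⟨M, fun m hm => ?_⟩
      obtain ⟨q, hq1, hq2⟩ := hM (m - M)
      rw [Nat.add_sub_cancel' hm] at hq1 hq2
      rw [hq2, hq1]
  rw [key]
  refine BaireMeasurableSet.iUnion fun M => BaireMeasurableSet.iInter fun t =>
    BaireMeasurableSet.iUnion fun q => BaireMeasurableSet.inter ?_ ?_
  · exact hBM _ (isOpen_S_eq k (M+t) q)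
  · exact BaireMeasurableSet.preimage (continuous_flp _) (isOpenMap_flp _)
      (hBM _ (isOpen_S_eq k (M+t) (q+a)))

lemma residual_infinitely_false :
    ∀ᶠ x in residual (ℕ → Bool), ∀ N : ℕ, ∃ n : ℕ, N ≤ n ∧ x n = false := by
  rw [eventually_countable_forall]
  intro N
  show {x : ℕ → Bool | ∃ n, N ≤ n ∧ x n = false} ∈ residual _
  have hset : {x : ℕ → Bool | ∃ n, N ≤ n ∧ x n = false}
      = ⋃ n, ⋃ (_ : N ≤ n), (fun x : ℕ → Bool => x n) ⁻¹' {false} := by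
    ext x; simp [Set.mem_preimage]
  rw [hset]
  apply residual_of_dense_open
  · exact isOpen_iUnion fun n => isOpen_iUnion fun _ =>
      IsOpen.preimage (continuous_apply n) (isOpen_discrete _)
  · rw [dense_iff_inter_open]
    rintro U hU ⟨z, hz⟩
    obtain ⟨I, u, hIu, hsub⟩ := isOpen_pi_iff.1 hU z hz
    obtain ⟨Mb, hMb⟩ := I.exists_nat_subset_range
    refine ⟨Function.update z (max N Mb) false, hsub (Set.mem_pi.2 ?_), ?_⟩
    · intro i hi
      have hiI : i ∈ I := hi
      have hne : i ≠ max N Mb := by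
        intro h; subst h
        have := Finset.mem_range.1 (hMb hiI); omega
      rw [Function.update_of_ne hne]
      exact (hIu i hiI).2
    · exact Set.mem_iUnion.2 ⟨max N Mb, Set.mem_iUnion.2
        ⟨le_max_left _ _, by simp [Function.update_self]⟩⟩

end NBMH

open Filter Set Topology NBMH

theorem no_baire_measurable_homomorphism_of_coprime
    (j k : ℕ) (hj : 2 ≤ j) (hk : 2 ≤ k) (hcop : Nat.Coprime j k) :
    ¬ ∃ φ : (ℕ → Bool) → (ℕ → Bool), BaireMeasurableFun φ ∧
      (∀ c d, E0 c d → ¬ F0 j c d → E0 (φ c) (φ d) ∧ ¬ F0 k (φ c) (φ d)) ∧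
      (∀ c d, F0 j c d → F0 k (φ c) (φ d)) := by
  rintro ⟨φ, hBM, h1, h2⟩
  haveI : NeZero k := ⟨by omega⟩
  -- φ preserves E₀
  have hE : ∀ c d, E0 c d → E0 (φ c) (φ d) := by
    intro c d hcd
    by_cases hF : F0 j c d
    · exact E0_of_F0 hk (h2 c d hF)
    · exact (h1 c d hcd hF).1
  -- the Baire-measurable "increment" sets
  set A : ℕ → ZMod k → Set (ℕ → Bool) :=
    fun n a => {x | Dk k (φ x) (φ (flp {n} x)) a} with hAdef
  have hAmeas : ∀ (n : ℕ) (a : ZMod k), BaireMeasurableSet (A n a) :=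
    fun n a => baireMeasurable_A k φ hBM n a
  choose U hUopen hUeq using fun (n : ℕ) (a : ZMod k) => (hAmeas n a).residualEq_isOpen
  -- a generic point
  have hW : ∀ᶠ x in residual (ℕ → Bool), ∀ (n : ℕ) (a : ZMod k), x ∈ A n a ↔ x ∈ U n a := by
    rw [eventually_countable_forall]
    intro n
    rw [eventually_countable_forall]
    intro a
    exact Filter.eventuallyEq_set.1 (hUeq n a)
  have hW' : ∀ᶠ x in residual (ℕ → Bool), ∀ F : Finset ℕ, ∀ (n : ℕ) (a : ZMod k),
      (flp F x ∈ A n a ↔ flp F x ∈ U n a) := by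
    rw [eventually_countable_forall]
    intro F
    exact (tendsto_residual_of_isOpenMap (continuous_flp F) (isOpenMap_flp F)).eventually hW
  obtain ⟨x, hx1, hx2⟩ := (dense_of_mem_residual (hW'.and residual_infinitely_false)).nonempty
  -- the increments at x and their moduli of continuity
  have haex : ∀ n : ℕ, ∃ a : ZMod k, x ∈ A n a := fun n =>
    dk_exists (hE x (flp {n} x) (E0_flp _ _))
  choose a ha using haex
  have hxU : ∀ n, x ∈ U n (a n) := by
    intro n
    have h := hx1 ∅ n (a n)
    rw [flp_empty] at h
    exact h.1 (ha n)
  have hMex : ∀ n : ℕ, ∃ M : ℕ, ∀ G : Finset ℕ, (∀ i ∈ G, M ≤ i) → flp G x ∈ A n (a n) := by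
    intro n
    obtain ⟨I, u, hIu, hsub⟩ := isOpen_pi_iff.1 (hUopen n (a n)) x (hxU n)
    obtain ⟨Mb, hMb⟩ := I.exists_nat_subset_range
    refine ⟨Mb, fun G hG => ?_⟩
    refine (hx1 G n (a n)).2 (hsub (Set.mem_pi.2 ?_))
    intro i hi
    have hiI : i ∈ I := hi
    have : flp G x i = x i := flp_of_not_mem (fun hmem => by
      have hg := hG i hmem
      have hr := Finset.mem_range.1 (hMb hiI)
      omega)
    rw [this]
    exact (hIu i hiI).2
  choose M hM using hMex
  -- a rapidly spread sequence of false coordinates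
  obtain ⟨g, hgfalse, hgmono, hgM⟩ : ∃ g : ℕ → ℕ, (∀ t, x (g t) = false) ∧
      StrictMono g ∧ (∀ s t, s < t → M (g s) ≤ g t) := by
    choose f hf1 hf2 using hx2
    set h : ℕ → ℕ × ℕ := fun t => Nat.rec (f 0, M (f 0))
      (fun _ p => (f (max (p.1 + 1) p.2), max p.2 (M (f (max (p.1 + 1) p.2))))) t with hhdef
    have hstep : ∀ t, h (t+1)
        = (f (max ((h t).1 + 1) (h t).2), max (h t).2 (M (f (max ((h t).1 + 1) (h t).2)))) :=
      fun t => rfl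
    have p1 : ∀ t, x ((h t).1) = false := by
      intro t
      cases t with
      | zero => exact hf2 0
      | succ t => rw [hstep t]; exact hf2 _
    have p2 : ∀ t, (h t).1 + 1 ≤ (h (t+1)).1 ∧ (h t).2 ≤ (h (t+1)).1 := by
      intro t
      rw [hstep t]
      have := hf1 (max ((h t).1 + 1) (h t).2)
      exact ⟨le_trans (le_max_left _ _) this, le_trans (le_max_right _ _) this⟩
    have p3 : ∀ t, M ((h t).1) ≤ (h t).2 := by
      intro t
      cases t with
      | zero => exact le_refl _
      | succ t => rw [hstep t]; exact le_max_right _ _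
    have p4 : Monotone (fun t => (h t).2) :=
      monotone_nat_of_le_succ (fun t => by rw [hstep t]; exact le_max_left _ _)
    refine ⟨fun t => (h t).1, p1, strictMono_nat_of_lt_succ (fun t => (p2 t).1), ?_⟩
    intro s t hst
    calc M ((h s).1) ≤ (h s).2 := p3 s
      _ ≤ (h (t-1)).2 := p4 (by omega)
      _ ≤ (h t).1 := by
          have := (p2 (t-1)).2
          have ht : t - 1 + 1 = t := by omega
          rwa [ht] at this
  -- telescoping the cocycle along flips of spread coordinates
  have tele : ∀ T : Finset ℕ, ∀ᶠ m in atTop,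
      ((S (φ (flp (T.image g) x)) m : ℕ) : ZMod k)
        = ((S (φ x) m : ℕ) : ZMod k) + ∑ t ∈ T, a (g t) := by
    intro T
    induction T using Finset.induction_on_min with
    | empty =>
      rw [Finset.image_empty, flp_empty, Finset.sum_empty]
      exact Filter.Eventually.of_forall fun m => by rw [add_zero]
    | insert t T' hlt ih =>
      have htT' : t ∉ T' := fun hmem => lt_irrefl t (hlt t hmem)
      have hgim : g t ∉ T'.image g := by
        intro hmem
        obtain ⟨s, hs, hgs⟩ := Finset.mem_image.1 hmem
        exact absurd (hgmono.injective hgs) (by intro h; exact htT' (h ▸ hs))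
      have himg : (insert t T').image g = insert (g t) (T'.image g) := Finset.image_insert _ _ _
      have hmemA : flp (T'.image g) x ∈ A (g t) (a (g t)) := by
        refine hM (g t) _ ?_
        intro i hi
        obtain ⟨s, hs, rfl⟩ := Finset.mem_image.1 hi
        exact hgM t s (hlt s hs)
      have hstepev : ∀ᶠ m in atTop,
          ((S (φ (flp {g t} (flp (T'.image g) x))) m : ℕ) : ZMod k)
            = ((S (φ (flp (T'.image g) x)) m : ℕ) : ZMod k) + a (g t) := hmemA
      refine (ih.and hstepev).mono fun m ⟨hm1, hm2⟩ => ?_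
      rw [himg, flp_insert hgim, hm2, hm1, Finset.sum_insert htT']
      ring
  -- every j-element index set gives sum 0
  have hsum : ∀ T : Finset ℕ, T ⊆ Finset.range (j+1) → T.card = j →
      ∑ t ∈ T, a (g t) = 0 := by
    intro T hTsub hTcard
    have hFf : ∀ i ∈ T.image g, x i = false := by
      intro i hi
      obtain ⟨s, _, rfl⟩ := Finset.mem_image.1 hi
      exact hgfalse s
    have hcard : (T.image g).card = j := by
      rw [Finset.card_image_of_injective _ hgmono.injective, hTcard]
    have hF0j : F0 j x (flp (T.image g) x) := F0_flp_of_dvd hFf (hcard ▸ dvd_refl j)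
    have hdk0 : Dk k (φ x) (φ (flp (T.image g) x)) 0 := dk_of_F0 (h2 _ _ hF0j)
    obtain ⟨m, hm1, hm2⟩ := ((tele T).and hdk0).exists
    rw [add_zero] at hm2
    have := hm1.symm.trans hm2
    have h0 : ((S (φ x) m : ℕ) : ZMod k) + ∑ t ∈ T, a (g t)
        = ((S (φ x) m : ℕ) : ZMod k) + 0 := by rw [this, add_zero]
    exact add_left_cancel h0
  -- increments are nonzero
  have hne : ∀ t, a (g t) ≠ 0 := by
    intro t h0
    have hmem : Dk k (φ x) (φ (flp {g t} x)) (a (g t)) := ha (g t)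
    rw [h0] at hmem
    have hFk : F0 k (φ x) (φ (flp {g t} x)) := F0_of_dk0 hmem
    have hnotj : ¬ F0 j x (flp {g t} x) := not_F0_single hj (hgfalse t)
    exact (h1 x _ (E0_flp _ _) hnotj).2 hFk
  -- final arithmetic in ZMod k
  set Tot : ZMod k := ∑ t ∈ Finset.range (j+1), a (g t) with hTotdef
  have hbt : ∀ t ∈ Finset.range (j+1), a (g t) = Tot := by
    intro t ht
    have h0 : ∑ s ∈ (Finset.range (j+1)).erase t, a (g s) = 0 :=
      hsum _ (Finset.erase_subset _ _) (by rw [Finset.card_erase_of_mem ht, Finset.card_range]; omega)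
    have hadd : a (g t) + ∑ s ∈ (Finset.range (j+1)).erase t, a (g s) = Tot :=
      Finset.add_sum_erase _ (fun s => a (g s)) ht
    rw [h0, add_zero] at hadd
    exact hadd
  have h00 : (0 : ℕ) ∈ Finset.range (j+1) := by simp
  have h0' : ∑ s ∈ (Finset.range (j+1)).erase 0, a (g s) = 0 :=
    hsum _ (Finset.erase_subset _ _) (by rw [Finset.card_erase_of_mem h00, Finset.card_range]; omega)
  have hconst : ∑ s ∈ (Finset.range (j+1)).erase 0, a (g s) = (j : ZMod k) * Tot := by
    rw [Finset.sum_congr rfl (fun s hs => hbt s (Finset.mem_of_mem_erase hs)),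
      Finset.sum_const, Finset.card_erase_of_mem h00, Finset.card_range]
    simp [nsmul_eq_mul]
  have hunit : IsUnit ((j : ℕ) : ZMod k) := (ZMod.isUnit_iff_coprime j k).2 hcop
  have hTot0 : Tot = 0 := (hunit.mul_right_eq_zero).1 (by rw [← hconst, h0'])
  exact hne 0 (by rw [hbt 0 h00, hTot0])
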